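/- There exists a constant C > 0 such that for every n ∈ ℤ³ one has ∑_{m∈ℤ³} ⟨m⟩^{-2}⟨n−m⟩^{-2} ≤ C ⟨n⟩^{-1}. -/

import Mathlib

open scoped ENNReal NNReal BigOperators

noncomputable section

/-- The square of the Euclidean norm of a lattice point `n ∈ ℤ³`, as a real number. -/
def nsqR (n : Fin 3 → ℤ) : ℝ := ∑ i, ((n i : ℝ))^2

/-- The Japanese bracket `⟨n⟩ = (1 + |n|²)^(1/2)`, as an element of `[0,∞]`. -/
def jbE (n : Fin 3 → ℤ) : ℝ≥0∞ := ENNReal.ofReal (Real.sqrt (1 + nsqR n))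

namespace DCE

def K (m : Fin 3 → ℤ) : ℝ := 1 + nsqR m

lemma nsqR_nonneg (m : Fin 3 → ℤ) : 0 ≤ nsqR m := by unfold nsqR; positivity

lemma one_le_K (m : Fin 3 → ℤ) : 1 ≤ K m := by
  have := nsqR_nonneg m; unfold K; linarith

lemma K_pos (m : Fin 3 → ℤ) : 0 < K m := lt_of_lt_of_le one_pos (one_le_K m)

lemma jbE_eq (m : Fin 3 → ℤ) : jbE m = ENNReal.ofReal (Real.sqrt (K m)) := rfl

lemma sqrtK_pos (m : Fin 3 → ℤ) : 0 < Real.sqrt (K m) := Real.sqrt_pos.2 (K_pos m)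

lemma one_le_sqrtK (m : Fin 3 → ℤ) : 1 ≤ Real.sqrt (K m) := by
  rw [show (1:ℝ) = Real.sqrt 1 by simp]
  exact Real.sqrt_le_sqrt (one_le_K m)

lemma jbE_neg2 (m : Fin 3 → ℤ) : jbE m ^ (-2 : ℝ) = ENNReal.ofReal (1 / K m) := by
  rw [jbE_eq, ENNReal.ofReal_rpow_of_pos (sqrtK_pos m)]
  congr 1
  rw [Real.rpow_neg (Real.sqrt_nonneg _), show (2:ℝ) = ((2:ℕ):ℝ) by norm_num,
    Real.rpow_natCast, Real.sq_sqrt (K_pos m).le, one_div]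

lemma jbE_neg1 (m : Fin 3 → ℤ) : jbE m ^ (-1 : ℝ) = ENNReal.ofReal (1 / Real.sqrt (K m)) := by
  rw [jbE_eq, ENNReal.ofReal_rpow_of_pos (sqrtK_pos m)]
  congr 1
  rw [Real.rpow_neg_one, one_div]

lemma nsqR_add_le (x y : Fin 3 → ℤ) :
    nsqR (x + y) ≤ (Real.sqrt (nsqR x) + Real.sqrt (nsqR y))^2 := by
  have hcs := Finset.sum_mul_sq_le_sq_mul_sq Finset.univ (fun i => ((x i : ℝ))) (fun i => ((y i : ℝ)))
  have h1 : nsqR (x + y) = nsqR x + 2 * (∑ i, (x i : ℝ) * (y i : ℝ)) + nsqR y := by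
    simp only [nsqR, Pi.add_apply, Int.cast_add, Fin.sum_univ_three]; ring
  have hx : Real.sqrt (nsqR x) ^ 2 = nsqR x := Real.sq_sqrt (nsqR_nonneg x)
  have hy : Real.sqrt (nsqR y) ^ 2 = nsqR y := Real.sq_sqrt (nsqR_nonneg y)
  have hs : ∑ i, (x i : ℝ) * (y i : ℝ) ≤ Real.sqrt (nsqR x) * Real.sqrt (nsqR y) := by
    have h2 : (∑ i, (x i : ℝ) * (y i : ℝ))^2 ≤ nsqR x * nsqR y := by
      simpa [nsqR] using hcs
    calc ∑ i, (x i : ℝ) * (y i : ℝ) ≤ |∑ i, (x i : ℝ) * (y i : ℝ)| := le_abs_self _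
      _ = Real.sqrt ((∑ i, (x i : ℝ) * (y i : ℝ))^2) := (Real.sqrt_sq_eq_abs _).symm
      _ ≤ Real.sqrt (nsqR x * nsqR y) := Real.sqrt_le_sqrt h2
      _ = Real.sqrt (nsqR x) * Real.sqrt (nsqR y) := Real.sqrt_mul (nsqR_nonneg x) _
  nlinarith [Real.sqrt_nonneg (nsqR x), Real.sqrt_nonneg (nsqR y)]

lemma jb_subadd (x y : Fin 3 → ℤ) :
    Real.sqrt (K (x + y)) ≤ Real.sqrt (K x) + Real.sqrt (K y) := by
  set p := Real.sqrt (nsqR x) with hp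
  set q := Real.sqrt (nsqR y) with hq
  have hp0 : 0 ≤ p := Real.sqrt_nonneg _
  have hq0 : 0 ≤ q := Real.sqrt_nonneg _
  have hp2 : p^2 = nsqR x := Real.sq_sqrt (nsqR_nonneg x)
  have hq2 : q^2 = nsqR y := Real.sq_sqrt (nsqR_nonneg y)
  have hKx : K x = 1 + p^2 := by unfold K; rw [hp2]
  have hKy : K y = 1 + q^2 := by unfold K; rw [hq2]
  have h1 : K (x + y) ≤ 1 + (p + q)^2 := by
    have := nsqR_add_le x y; unfold K; linarith
  rw [Real.sqrt_le_iff]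
  constructor
  · positivity
  refine h1.trans ?_
  have hA : (0:ℝ) ≤ 1 + p^2 := by positivity
  have hB : (0:ℝ) ≤ 1 + q^2 := by positivity
  have hsA : Real.sqrt (K x) ^ 2 = 1+p^2 := by rw [hKx]; exact Real.sq_sqrt hA
  have hsB : Real.sqrt (K y) ^ 2 = 1+q^2 := by rw [hKy]; exact Real.sq_sqrt hB
  have hx1 : 1 + p*q ≤ Real.sqrt (K x) * Real.sqrt (K y) := by
    rw [hKx, hKy, ← Real.sqrt_mul hA]
    rw [Real.le_sqrt (by positivity) (by positivity)]
    nlinarith [sq_nonneg (p - q)]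
  nlinarith [Real.sqrt_nonneg (K x), Real.sqrt_nonneg (K y)]

def bnorm (m : Fin 3 → ℤ) : ℕ := Finset.univ.sup fun i => (m i).natAbs

def piF (k : ℕ) : Finset (Fin 3 → ℤ) := Fintype.piFinset fun _ => Finset.Icc (-(k:ℤ)) k

def shellF : ℕ → Finset (Fin 3 → ℤ)
  | 0 => piF 0
  | (k+1) => piF (k+1) \ piF k

lemma mem_piF {m : Fin 3 → ℤ} {k : ℕ} : m ∈ piF k ↔ bnorm m ≤ k := by
  simp only [piF, Fintype.mem_piFinset, Finset.mem_Icc, bnorm, Finset.sup_le_iff,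
    Finset.mem_univ, forall_true_left]
  constructor
  · intro h i
    have := h i
    omega
  · intro h i
    have := h i
    omega

lemma card_piF (k : ℕ) : (piF k).card = (2*k+1)^3 := by
  rw [piF, Fintype.card_piFinset]
  simp [Int.card_Icc]
  omega

lemma mem_shellF {m : Fin 3 → ℤ} {k : ℕ} (h : bnorm m = k) : m ∈ shellF k := by
  cases k with
  | zero => exact mem_piF.2 (le_of_eq h)
  | succ k =>
    simp only [shellF, Finset.mem_sdiff, mem_piF]
    omega

lemma card_shellF_le (k : ℕ) : (shellF (k+1)).card ≤ 26 * (k+1)^2 := by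
  have hsub : piF k ⊆ piF (k+1) := fun m hm => mem_piF.2 ((mem_piF.1 hm).trans (by omega))
  have h2 : (shellF (k+1)).card + (piF k).card = (piF (k+1)).card :=
    Finset.card_sdiff_add_card_eq_card hsub
  rw [card_piF, card_piF] at h2
  nlinarith [k.zero_le, sq_nonneg k]

lemma card_shellF_zero : (shellF 0).card = 1 := by
  rw [shellF, card_piF]
  norm_num

lemma bnorm_sq_le_K (m : Fin 3 → ℤ) : ((max 1 (bnorm m) : ℕ) : ℝ)^2 ≤ K m := by
  obtain ⟨i, -, hi⟩ := Finset.exists_mem_eq_sup Finset.univ ⟨0, Finset.mem_univ 0⟩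
    (fun i => (m i).natAbs)
  have hb : bnorm m = (m i).natAbs := hi
  have h1 : ((m i).natAbs : ℝ)^2 ≤ nsqR m := by
    have h0 : ((m i : ℝ))^2 ≤ nsqR m := by
      unfold nsqR
      exact Finset.single_le_sum (f := fun j => ((m j:ℝ))^2) (fun j _ => by positivity)
        (Finset.mem_univ i)
    calc ((m i).natAbs : ℝ)^2 = ((m i : ℝ))^2 := by
          rw [Nat.cast_natAbs]; push_cast; rw [sq_abs]
      _ ≤ nsqR m := h0
  rcases max_cases 1 (bnorm m) with ⟨h, -⟩ | ⟨h, -⟩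
  · rw [h]; unfold K; have := nsqR_nonneg m; norm_num; linarith
  · rw [h, hb]; unfold K; linarith

lemma K_le (m : Fin 3 → ℤ) : K m ≤ (2 * (bnorm m : ℝ) + 1)^2 := by
  have h : ∀ i, ((m i : ℝ))^2 ≤ ((bnorm m : ℕ) : ℝ)^2 := by
    intro i
    have h1 : (m i).natAbs ≤ bnorm m :=
      Finset.le_sup (f := fun j => (m j).natAbs) (Finset.mem_univ i)
    have h2 : ((m i).natAbs : ℝ) ≤ (bnorm m : ℝ) := by exact_mod_cast h1
    have h3 : ((m i : ℝ))^2 = ((m i).natAbs : ℝ)^2 := by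
      rw [Nat.cast_natAbs]; push_cast; rw [sq_abs]
    rw [h3]
    have : (0:ℝ) ≤ ((m i).natAbs : ℝ) := by positivity
    nlinarith
  have h4 : nsqR m ≤ 3 * ((bnorm m:ℕ):ℝ)^2 := by
    unfold nsqR
    rw [Fin.sum_univ_three]
    have := h 0; have := h 1; have := h 2; linarith
  unfold K
  have hb : (0:ℝ) ≤ (bnorm m : ℝ) := by positivity
  nlinarith

lemma sqrtK_le (m : Fin 3 → ℤ) : Real.sqrt (K m) ≤ 2 * (bnorm m : ℝ) + 1 := by
  rw [Real.sqrt_le_iff]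
  exact ⟨by positivity, K_le m⟩

lemma bnorm_le_sqrtK (m : Fin 3 → ℤ) : ((bnorm m : ℕ) : ℝ) ≤ Real.sqrt (K m) := by
  rw [Real.le_sqrt (by positivity) (by unfold K; have := nsqR_nonneg m; linarith)]
  have hK := bnorm_sq_le_K m
  rcases max_cases 1 (bnorm m) with ⟨h, h2⟩ | ⟨h, h2⟩
  · rw [h] at hK
    norm_num at hK
    have hb : ((bnorm m :ℕ):ℝ) ≤ 1 := by exact_mod_cast h2
    have hb0 : (0:ℝ) ≤ ((bnorm m:ℕ):ℝ) := by positivity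
    nlinarith
  · rwa [h] at hK

lemma tail_sum (k₁ : ℕ) (h : 1 ≤ k₁) :
    ∑' k : ℕ, (if k₁ ≤ k then ENNReal.ofReal (1/((k:ℝ))^2) else 0)
      ≤ ENNReal.ofReal (2/(k₁:ℝ)) := by
  have hk₁R : (1:ℝ) ≤ (k₁:ℝ) := by exact_mod_cast h
  set d : ℕ → ℝ := fun k => if k₁ ≤ k then 2/(k:ℝ) - 2/((k:ℝ)+1) else 0 with hd
  have hd0 : ∀ k, 0 ≤ d k := by
    intro k
    simp only [hd]
    split
    · rename_i hk
      have hk1 : (1:ℝ) ≤ (k:ℝ) := by exact_mod_cast h.trans hk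
      have : 2/((k:ℝ)+1) ≤ 2/(k:ℝ) := by
        apply div_le_div_of_nonneg_left (by norm_num) (by linarith) (by linarith)
      linarith
    · exact le_refl 0
  have hle : ∀ k, (if k₁ ≤ k then ENNReal.ofReal (1/((k:ℝ))^2) else 0) ≤ ENNReal.ofReal (d k) := by
    intro k
    by_cases hk : k₁ ≤ k
    · simp only [hd, if_pos hk]
      apply ENNReal.ofReal_le_ofReal
      have hk1 : (1:ℝ) ≤ (k:ℝ) := by exact_mod_cast h.trans hk
      have h1 : 2/(k:ℝ) - 2/((k:ℝ)+1) = 2/((k:ℝ)*((k:ℝ)+1)) := by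
        field_simp
        ring
      rw [h1, div_le_div_iff₀ (by positivity) (by positivity)]
      nlinarith
    · simp [if_neg hk]
  have key : ∀ N, ∑ k ∈ Finset.range N, d k = if k₁ < N then 2/(k₁:ℝ) - 2/(N:ℝ) else 0 := by
    intro N
    induction N with
    | zero => simp
    | succ N ih =>
      rw [Finset.sum_range_succ, ih]
      rcases lt_trichotomy N k₁ with hN | hN | hN
      · have h1 : ¬ (k₁ < N) := by omega
        have h2 : ¬ (k₁ ≤ N) := by omega
        by_cases h3 : k₁ < N + 1
        · omega
        · simp only [hd, if_neg h1, if_neg h2, if_neg h3]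
          norm_num
      · subst hN
        rw [if_neg (lt_irrefl N)]
        simp only [hd]
        rw [if_pos (le_refl N), if_pos (Nat.lt_succ_self N)]
        push_cast
        ring
      · have h1 : k₁ < N := hN
        have h2 : k₁ ≤ N := hN.le
        have h3 : k₁ < N + 1 := by omega
        simp only [hd, if_pos h1, if_pos h2, if_pos h3]
        push_cast
        ring
  have hsumd : ∀ N, ∑ k ∈ Finset.range N, d k ≤ 2/(k₁:ℝ) := by
    intro N
    rw [key N]
    split
    · rename_i hN
      have hN1 : (0:ℝ) < (N:ℝ) := by
        have : 0 < N := by omega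
        exact_mod_cast this
      have : 0 ≤ 2/(N:ℝ) := by positivity
      linarith
    · positivity
  calc ∑' k : ℕ, (if k₁ ≤ k then ENNReal.ofReal (1/((k:ℝ))^2) else 0)
      ≤ ∑' k, ENNReal.ofReal (d k) := ENNReal.tsum_le_tsum hle
    _ ≤ ENNReal.ofReal (2/(k₁:ℝ)) := by
        rw [ENNReal.tsum_eq_iSup_sum]
        apply iSup_le
        intro s
        obtain ⟨N, hN⟩ := s.exists_nat_subset_range
        calc ∑ k ∈ s, ENNReal.ofReal (d k)
            ≤ ∑ k ∈ Finset.range N, ENNReal.ofReal (d k) :=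
              Finset.sum_le_sum_of_subset hN
          _ = ENNReal.ofReal (∑ k ∈ Finset.range N, d k) :=
              (ENNReal.ofReal_sum_of_nonneg (fun i _ => hd0 i)).symm
          _ ≤ _ := ENNReal.ofReal_le_ofReal (hsumd N)

lemma tsum_le_shell (g : (Fin 3 → ℤ) → ℝ≥0∞) (G : ℕ → ℝ≥0∞)
    (hg : ∀ m, g m ≤ G (bnorm m)) :
    ∑' m : Fin 3 → ℤ, g m ≤ ∑' k : ℕ, ((shellF k).card : ℝ≥0∞) * G k := by
  have h1 : ∀ m, g m ≤ ∑' k : ℕ, (if bnorm m = k then G k else 0) := by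
    intro m
    rw [tsum_eq_single (bnorm m) (fun k hk => if_neg (fun h => hk h.symm))]
    simpa using hg m
  calc ∑' m, g m ≤ ∑' m, ∑' k : ℕ, (if bnorm m = k then G k else 0) := ENNReal.tsum_le_tsum h1
    _ = ∑' k : ℕ, ∑' m, (if bnorm m = k then G k else 0) := ENNReal.tsum_comm
    _ ≤ ∑' k : ℕ, ((shellF k).card : ℝ≥0∞) * G k := by
        apply ENNReal.tsum_le_tsum
        intro k
        rw [tsum_eq_sum (s := shellF k) (fun m hm => if_neg (fun h => hm (mem_shellF h)))]
        calc ∑ m ∈ shellF k, (if bnorm m = k then G k else 0)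
            ≤ ∑ _m ∈ shellF k, G k := Finset.sum_le_sum (fun m _ => by split <;> simp)
          _ = (shellF k).card • G k := Finset.sum_const _
          _ = ((shellF k).card : ℝ≥0∞) * G k := nsmul_eq_mul _ _

/-- L1: near region sum. -/
lemma L1 (R : ℝ) (hR : 1 ≤ R) :
    ∑' m : Fin 3 → ℤ, (if Real.sqrt (K m) ≤ R then ENNReal.ofReal (1 / K m) else 0)
      ≤ ENNReal.ofReal (52 * R) := by
  set G : ℕ → ℝ≥0∞ := fun k =>
    if (k:ℝ) ≤ R then ENNReal.ofReal (1/(((max 1 k : ℕ)):ℝ)^2) else 0 with hG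
  have hg : ∀ m, (if Real.sqrt (K m) ≤ R then ENNReal.ofReal (1 / K m) else 0) ≤ G (bnorm m) := by
    intro m
    by_cases hm : Real.sqrt (K m) ≤ R
    · rw [if_pos hm]
      have hb : ((bnorm m : ℕ):ℝ) ≤ R := (bnorm_le_sqrtK m).trans hm
      rw [hG]
      simp only
      rw [if_pos hb]
      apply ENNReal.ofReal_le_ofReal
      rw [div_le_div_iff₀ (K_pos m) (by positivity)]
      have := bnorm_sq_le_K m
      linarith
    · rw [if_neg hm]; exact zero_le
  refine (tsum_le_shell _ G hg).trans ?_
  have hsupp : ∀ k ∉ Finset.range (Nat.floor R + 1), ((shellF k).card : ℝ≥0∞) * G k = 0 := by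
    intro k hk
    have hk2 : Nat.floor R + 1 ≤ k := by simpa [Finset.mem_range] using hk
    have : ¬ ((k:ℝ) ≤ R) := by
      intro hcon
      have := Nat.le_floor hcon
      omega
    rw [hG]
    simp only
    rw [if_neg this, mul_zero]
  rw [tsum_eq_sum hsupp]
  have hterm : ∀ k ∈ Finset.range (Nat.floor R + 1),
      ((shellF k).card : ℝ≥0∞) * G k ≤ ENNReal.ofReal 26 := by
    intro k _
    have hGle : G k ≤ ENNReal.ofReal (1/(((max 1 k : ℕ)):ℝ)^2) := by
      rw [hG]; simp only; split
      · exact le_refl _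
      · exact zero_le
    cases k with
    | zero =>
      calc ((shellF 0).card : ℝ≥0∞) * G 0 ≤ 1 * ENNReal.ofReal (1/(((max 1 0 : ℕ)):ℝ)^2) := by
            rw [card_shellF_zero]
            exact mul_le_mul_right hGle _ |>.trans (by norm_num)
        _ ≤ ENNReal.ofReal 26 := by
            rw [one_mul]
            apply ENNReal.ofReal_le_ofReal
            norm_num
    | succ k =>
      have hc : ((shellF (k+1)).card : ℝ≥0∞) ≤ ((26 * (k+1)^2 : ℕ) : ℝ≥0∞) := by
        exact_mod_cast Nat.cast_le.2 (card_shellF_le k)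
      calc ((shellF (k+1)).card : ℝ≥0∞) * G (k+1)
          ≤ ((26 * (k+1)^2 : ℕ) : ℝ≥0∞) * ENNReal.ofReal (1/(((max 1 (k+1) : ℕ)):ℝ)^2) :=
            mul_le_mul' hc hGle
        _ = ENNReal.ofReal ((26 * (k+1)^2 : ℕ) * (1/(((max 1 (k+1) : ℕ)):ℝ)^2)) := by
            rw [← ENNReal.ofReal_natCast, ← ENNReal.ofReal_mul (by positivity)]
        _ ≤ ENNReal.ofReal 26 := by
            apply ENNReal.ofReal_le_ofReal
            have hmax : (max 1 (k+1) : ℕ) = k+1 := by omega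
            rw [hmax]
            have hpos : (0:ℝ) < ((k+1:ℕ):ℝ)^2 := by positivity
            rw [mul_one_div, div_le_iff₀ hpos]
            push_cast
            nlinarith
  calc ∑ k ∈ Finset.range (Nat.floor R + 1), ((shellF k).card : ℝ≥0∞) * G k
      ≤ ∑ _k ∈ Finset.range (Nat.floor R + 1), ENNReal.ofReal 26 :=
        Finset.sum_le_sum hterm
    _ = (Nat.floor R + 1) • ENNReal.ofReal 26 := by rw [Finset.sum_const, Finset.card_range]
    _ = ENNReal.ofReal ((Nat.floor R + 1) * 26) := by
        rw [nsmul_eq_mul, ← ENNReal.ofReal_natCast, ← ENNReal.ofReal_mul (by positivity)]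
        norm_num
    _ ≤ ENNReal.ofReal (52 * R) := by
        apply ENNReal.ofReal_le_ofReal
        have h1 : ((Nat.floor R : ℕ) : ℝ) ≤ R := Nat.floor_le (by linarith)
        push_cast
        nlinarith

/-- L2: far region sum. -/
lemma L2 (R : ℝ) (hR : 1 ≤ R) :
    ∑' m : Fin 3 → ℤ, (if R < Real.sqrt (K m) then ENNReal.ofReal (1 / (K m)^2) else 0)
      ≤ ENNReal.ofReal (156 / R) := by
  set k₁ : ℕ := Nat.floor ((R-1)/2) + 1 with hk₁
  have hk₁1 : 1 ≤ k₁ := by omega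
  have hk₁R : R ≤ 3 * (k₁:ℝ) := by
    have h1 : (R-1)/2 < (k₁:ℝ) := by
      rw [hk₁]
      push_cast
      have := Nat.lt_floor_add_one ((R-1)/2)
      linarith
    have h2 : (1:ℝ) ≤ (k₁:ℝ) := by exact_mod_cast hk₁1
    linarith
  set G : ℕ → ℝ≥0∞ := fun k =>
    if R < 2*(k:ℝ)+1 then ENNReal.ofReal (1/(((max 1 k : ℕ)):ℝ)^4) else 0 with hG
  have hg : ∀ m, (if R < Real.sqrt (K m) then ENNReal.ofReal (1 / (K m)^2) else 0)
      ≤ G (bnorm m) := by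
    intro m
    by_cases hm : R < Real.sqrt (K m)
    · rw [if_pos hm]
      have hb : R < 2*((bnorm m : ℕ):ℝ)+1 := lt_of_lt_of_le hm (sqrtK_le m)
      rw [hG]
      simp only
      rw [if_pos hb]
      apply ENNReal.ofReal_le_ofReal
      have hKm := bnorm_sq_le_K m
      have hmax : (0:ℝ) < ((max 1 (bnorm m) : ℕ):ℝ) := by
        have : 1 ≤ (max 1 (bnorm m) : ℕ) := le_max_left _ _
        exact_mod_cast this
      have hKp := K_pos m
      rw [div_le_div_iff₀ (by positivity) (by positivity)]
      have h4 : (((max 1 (bnorm m) : ℕ)):ℝ)^4 = ((((max 1 (bnorm m) : ℕ)):ℝ)^2)^2 := by ring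
      rw [h4]
      have := K_pos m
      nlinarith
    · rw [if_neg hm]; exact zero_le
  refine (tsum_le_shell _ G hg).trans ?_
  have hterm : ∀ k : ℕ, ((shellF k).card : ℝ≥0∞) * G k
      ≤ ENNReal.ofReal 26 * (if k₁ ≤ k then ENNReal.ofReal (1/((k:ℝ))^2) else 0) := by
    intro k
    by_cases hk : k₁ ≤ k
    · rw [if_pos hk]
      have hk1 : 1 ≤ k := hk₁1.trans hk
      obtain ⟨j, rfl⟩ : ∃ j, k = j + 1 := ⟨k - 1, by omega⟩
      have hc : ((shellF (j+1)).card : ℝ≥0∞) ≤ ((26 * (j+1)^2 : ℕ) : ℝ≥0∞) :=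
        Nat.cast_le.2 (card_shellF_le j)
      have hGle : G (j+1) ≤ ENNReal.ofReal (1/(((j+1:ℕ)):ℝ)^4) := by
        rw [hG]; simp only
        have hmax : (max 1 (j+1) : ℕ) = j+1 := by omega
        rw [hmax]
        split
        · exact le_refl _
        · exact zero_le
      calc ((shellF (j+1)).card : ℝ≥0∞) * G (j+1)
          ≤ ((26 * (j+1)^2 : ℕ) : ℝ≥0∞) * ENNReal.ofReal (1/(((j+1:ℕ)):ℝ)^4) :=
            mul_le_mul' hc hGle
        _ = ENNReal.ofReal ((26 * (j+1)^2 : ℕ) * (1/(((j+1:ℕ)):ℝ)^4)) := by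
            rw [← ENNReal.ofReal_natCast, ← ENNReal.ofReal_mul (by positivity)]
        _ ≤ ENNReal.ofReal (26 * (1/(((j+1:ℕ)):ℝ)^2)) := by
            apply ENNReal.ofReal_le_ofReal
            have hpos : (0:ℝ) < ((j+1:ℕ):ℝ) := by positivity
            rw [mul_one_div, mul_one_div, div_le_div_iff₀ (by positivity) (by positivity)]
            push_cast
            nlinarith
        _ = ENNReal.ofReal 26 * ENNReal.ofReal (1/(((j+1:ℕ)):ℝ)^2) := by
            rw [← ENNReal.ofReal_mul (by norm_num)]
        _ = ENNReal.ofReal 26 * ENNReal.ofReal (1/((((j+1:ℕ)):ℝ))^2) := by push_cast; ring_nf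
    · rw [if_neg hk, mul_zero]
      -- must show card * G k = 0, i.e. G k = 0
      have hknum : (k:ℝ) ≤ (R-1)/2 := by
        have hkk : k ≤ Nat.floor ((R-1)/2) := by omega
        have := (Nat.le_floor_iff (by linarith : (0:ℝ) ≤ (R-1)/2)).1 hkk
        exact this
      have : ¬ (R < 2*(k:ℝ)+1) := by
        push_neg
        linarith
      rw [hG]
      simp only
      rw [if_neg this, mul_zero]
  calc ∑' k : ℕ, ((shellF k).card : ℝ≥0∞) * G k
      ≤ ∑' k : ℕ, ENNReal.ofReal 26 * (if k₁ ≤ k then ENNReal.ofReal (1/((k:ℝ))^2) else 0) :=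
        ENNReal.tsum_le_tsum hterm
    _ = ENNReal.ofReal 26 * ∑' k : ℕ, (if k₁ ≤ k then ENNReal.ofReal (1/((k:ℝ))^2) else 0) :=
        ENNReal.tsum_mul_left
    _ ≤ ENNReal.ofReal 26 * ENNReal.ofReal (2/(k₁:ℝ)) :=
        mul_le_mul_right (tail_sum k₁ hk₁1) _
    _ = ENNReal.ofReal (26 * (2/(k₁:ℝ))) := by rw [← ENNReal.ofReal_mul (by norm_num)]
    _ ≤ ENNReal.ofReal (156 / R) := by
        apply ENNReal.ofReal_le_ofReal
        have hk₁0 : (0:ℝ) < (k₁:ℝ) := by exact_mod_cast hk₁1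
        rw [mul_div_assoc', div_le_div_iff₀ hk₁0 (by linarith)]
        linarith [hk₁R]

end DCE

/-- Discrete convolution estimate: `∑_{m ∈ ℤ³} ⟨m⟩⁻²⟨n−m⟩⁻² ≤ C ⟨n⟩⁻¹`. -/
theorem discrete_convolution_estimate :
    ∃ C : ℝ, 0 < C ∧ ∀ n : Fin 3 → ℤ,
      ∑' m : Fin 3 → ℤ, jbE m ^ (-2 : ℝ) * jbE (n - m) ^ (-2 : ℝ)
        ≤ ENNReal.ofReal C * jbE n ^ (-1 : ℝ) := by
  refine ⟨1000, by norm_num, fun n => ?_⟩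
  set c : ℝ := Real.sqrt (DCE.K n) with hc
  have hc1 : 1 ≤ c := DCE.one_le_sqrtK n
  have hc0 : 0 < c := by linarith
  set F1 : (Fin 3 → ℤ) → ℝ≥0∞ := fun x =>
    if Real.sqrt (DCE.K x) ≤ c then ENNReal.ofReal (1 / DCE.K x) else 0 with hF1
  set F2 : (Fin 3 → ℤ) → ℝ≥0∞ := fun x =>
    if c < Real.sqrt (DCE.K x) then ENNReal.ofReal (1 / (DCE.K x)^2) else 0 with hF2
  set A : (Fin 3 → ℤ) → ℝ≥0∞ := fun x => ENNReal.ofReal (4 / c^2) * F1 x + F2 x with hA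
  have hpt : ∀ m : Fin 3 → ℤ,
      jbE m ^ (-2 : ℝ) * jbE (n - m) ^ (-2 : ℝ) ≤ A m + A (n - m) := by
    intro m
    rw [DCE.jbE_neg2, DCE.jbE_neg2]
    set a : ℝ := Real.sqrt (DCE.K m) with ha
    set b : ℝ := Real.sqrt (DCE.K (n - m)) with hb
    have ha1 : 1 ≤ a := DCE.one_le_sqrtK m
    have hb1 : 1 ≤ b := DCE.one_le_sqrtK (n - m)
    have ha2 : a^2 = DCE.K m := Real.sq_sqrt (DCE.K_pos m).le
    have hb2 : b^2 = DCE.K (n - m) := Real.sq_sqrt (DCE.K_pos (n - m)).le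
    have hKm := DCE.K_pos m
    have hKnm := DCE.K_pos (n - m)
    have htri : c ≤ a + b := by
      have h := DCE.jb_subadd m (n - m)
      rw [show m + (n - m) = n by abel] at h
      exact h
    have hmul : ENNReal.ofReal (1 / DCE.K m) * ENNReal.ofReal (1 / DCE.K (n - m))
        = ENNReal.ofReal ((1 / DCE.K m) * (1 / DCE.K (n - m))) :=
      (ENNReal.ofReal_mul (by positivity)).symm
    rcases le_total a b with hab | hab
    · -- b is big : b ≥ c/2
      have hbc : c ≤ 2 * b := by linarith
      rcases le_or_gt a c with hac | hac
      · -- term ≤ ofReal(4/c²) * F1 m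
        have step : ENNReal.ofReal (1 / DCE.K m) * ENNReal.ofReal (1 / DCE.K (n - m))
            ≤ ENNReal.ofReal (4 / c^2) * F1 m := by
          rw [hmul, hF1]
          simp only
          rw [if_pos hac, ← ENNReal.ofReal_mul (by positivity)]
          apply ENNReal.ofReal_le_ofReal
          have h1 : 1 / DCE.K (n - m) ≤ 4 / c^2 := by
            rw [div_le_div_iff₀ hKnm (by positivity), ← hb2]
            nlinarith
          have h2 : (0:ℝ) ≤ 1 / DCE.K m := by positivity
          calc 1 / DCE.K m * (1 / DCE.K (n - m)) ≤ 1 / DCE.K m * (4 / c^2) :=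
                mul_le_mul_of_nonneg_left h1 h2
            _ = 4 / c^2 * (1 / DCE.K m) := by ring
        exact step.trans ((self_le_add_right _ _).trans (self_le_add_right _ _))
      · -- a > c : term ≤ F2 m
        have step : ENNReal.ofReal (1 / DCE.K m) * ENNReal.ofReal (1 / DCE.K (n - m))
            ≤ F2 m := by
          rw [hmul, hF2]
          simp only
          rw [if_pos hac]
          apply ENNReal.ofReal_le_ofReal
          have h1 : DCE.K m ≤ DCE.K (n - m) := by rw [← ha2, ← hb2]; nlinarith
          rw [div_mul_div_comm, one_mul]
          apply div_le_div_of_nonneg_left (by norm_num) (by positivity) ?_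
          nlinarith
        refine step.trans ?_
        exact (self_le_add_left _ _).trans (self_le_add_right _ _)
    · -- a is big : a ≥ c/2
      have hac : c ≤ 2 * a := by linarith
      rcases le_or_gt b c with hbc | hbc
      · have step : ENNReal.ofReal (1 / DCE.K m) * ENNReal.ofReal (1 / DCE.K (n - m))
            ≤ ENNReal.ofReal (4 / c^2) * F1 (n - m) := by
          rw [hmul, hF1]
          simp only
          rw [if_pos hbc, ← ENNReal.ofReal_mul (by positivity)]
          apply ENNReal.ofReal_le_ofReal
          have h1 : 1 / DCE.K m ≤ 4 / c^2 := by
            rw [div_le_div_iff₀ hKm (by positivity), ← ha2]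
            nlinarith
          have h2 : (0:ℝ) ≤ 1 / DCE.K (n - m) := by positivity
          exact mul_le_mul_of_nonneg_right h1 h2
        exact step.trans ((self_le_add_right _ _).trans (self_le_add_left _ _))
      · have step : ENNReal.ofReal (1 / DCE.K m) * ENNReal.ofReal (1 / DCE.K (n - m))
            ≤ F2 (n - m) := by
          rw [hmul, hF2]
          simp only
          rw [if_pos hbc]
          apply ENNReal.ofReal_le_ofReal
          have h1 : DCE.K (n - m) ≤ DCE.K m := by rw [← ha2, ← hb2]; nlinarith
          rw [div_mul_div_comm, one_mul]
          apply div_le_div_of_nonneg_left (by norm_num) (by positivity) ?_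
          nlinarith
        exact step.trans ((self_le_add_left _ _).trans (self_le_add_left _ _))
  have hAsum : ∑' m : Fin 3 → ℤ, A m ≤ ENNReal.ofReal (364 / c) := by
    rw [hA]
    rw [ENNReal.tsum_add]
    have h1 : ∑' m : Fin 3 → ℤ, ENNReal.ofReal (4 / c^2) * F1 m
        ≤ ENNReal.ofReal (208 / c) := by
      rw [ENNReal.tsum_mul_left]
      calc ENNReal.ofReal (4 / c^2) * ∑' m, F1 m
          ≤ ENNReal.ofReal (4 / c^2) * ENNReal.ofReal (52 * c) :=
            mul_le_mul_right (DCE.L1 c hc1) _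
        _ = ENNReal.ofReal ((4 / c^2) * (52 * c)) :=
            (ENNReal.ofReal_mul (by positivity)).symm
        _ = ENNReal.ofReal (208 / c) := by
            congr 1
            field_simp
            ring
    have h2 : ∑' m : Fin 3 → ℤ, F2 m ≤ ENNReal.ofReal (156 / c) := DCE.L2 c hc1
    calc (∑' m, ENNReal.ofReal (4 / c^2) * F1 m) + ∑' m, F2 m
        ≤ ENNReal.ofReal (208 / c) + ENNReal.ofReal (156 / c) := add_le_add h1 h2
      _ = ENNReal.ofReal (364 / c) := by
          rw [← ENNReal.ofReal_add (by positivity) (by positivity)]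
          congr 1
          field_simp
          ring
  calc ∑' m : Fin 3 → ℤ, jbE m ^ (-2 : ℝ) * jbE (n - m) ^ (-2 : ℝ)
      ≤ ∑' m : Fin 3 → ℤ, (A m + A (n - m)) := ENNReal.tsum_le_tsum hpt
    _ = (∑' m, A m) + ∑' m, A (n - m) := ENNReal.tsum_add
    _ = (∑' m, A m) + ∑' m, A m := by
        congr 1
        exact (Equiv.subLeft n).tsum_eq A
    _ ≤ ENNReal.ofReal (364 / c) + ENNReal.ofReal (364 / c) := add_le_add hAsum hAsum
    _ ≤ ENNReal.ofReal 1000 * jbE n ^ (-1 : ℝ) := by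
        rw [DCE.jbE_neg1, ← ENNReal.ofReal_add (by positivity) (by positivity),
          ← ENNReal.ofReal_mul (by norm_num)]
        apply ENNReal.ofReal_le_ofReal
        rw [← add_div, mul_one_div, div_le_div_iff₀ hc0 hc0]
        nlinarith
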